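/- arXiv:1602.03924 — 4 statements merged into one kernel-verified Lean document; each statement's English description precedes it below -/
import Mathlib

section
/- If there exists a p-evident C-indicating event, then there exists a unique largest p-evident C-indicating event, i.e., a p-evident C-indicating event that contains every p-evident C-indicating event. -/
open Finset

variable {Ω : Type*}

/-- The conditional probability `P_i(E | ω) = μ(E ∩ Π_i(ω)) / μ(Π_i(ω))`,
where `part i ω` is the cell of player `i`'s information partition containing `ω`. -/
noncomputable def condP [Fintype Ω] [DecidableEq Ω] (μ : Ω → ℝ)
    (part : Fin 2 → Ω → Finset Ω) (i : Fin 2) (E : Finset Ω) (ω : Ω) : ℝ :=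
  (∑ x ∈ E ∩ part i ω, μ x) / (∑ x ∈ part i ω, μ x)

/-- `E` is `p`-evident: every player `p`-believes `E` at every state of `E`. -/
def pEvident [Fintype Ω] [DecidableEq Ω] (μ : Ω → ℝ)
    (part : Fin 2 → Ω → Finset Ω) (p : ℝ) (E : Finset Ω) : Prop :=
  ∀ i : Fin 2, ∀ ω ∈ E, p ≤ condP μ part i E ω

/-- `E` is a `p`-evident `C`-indicating event. -/
def pEvidentInd [Fintype Ω] [DecidableEq Ω] (μ : Ω → ℝ)
    (part : Fin 2 → Ω → Finset Ω) (p : ℝ) (C E : Finset Ω) : Prop :=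
  pEvident μ part p E ∧ ∀ i : Fin 2, ∀ ω ∈ E, p ≤ condP μ part i C ω

/-- `E` is the largest `p`-evident `C`-indicating event. -/
def isLargestInd [Fintype Ω] [DecidableEq Ω] (μ : Ω → ℝ)
    (part : Fin 2 → Ω → Finset Ω) (p : ℝ) (C E : Finset Ω) : Prop :=
  pEvidentInd μ part p C E ∧ ∀ F : Finset Ω, pEvidentInd μ part p C F → F ⊆ E

/-- `p` is the `C`-evidence level of `E`: the maximum `q` for which `E` is a
`q`-evident `C`-indicating event. -/
def isEvidenceLevel [Fintype Ω] [DecidableEq Ω] (μ : Ω → ℝ)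
    (part : Fin 2 → Ω → Finset Ω) (C E : Finset Ω) (p : ℝ) : Prop :=
  IsGreatest {q : ℝ | pEvidentInd μ part q C E} p

/-- `G` is the maximally evident `C`-indicating superset of `F`. -/
def isMaxEvidentSup [Fintype Ω] [DecidableEq Ω] (μ : Ω → ℝ)
    (part : Fin 2 → Ω → Finset Ω) (C F G : Finset Ω) : Prop :=
  F ⊆ G ∧ ∃ p : ℝ, isEvidenceLevel μ part C G p ∧ isLargestInd μ part p C G ∧
    ∀ H : Finset Ω, F ⊆ H → ∀ q : ℝ, isEvidenceLevel μ part C H q → q ≤ p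

/-- `E` is a maximally evident `C`-indicating event: it is the maximally evident
`C`-indicating superset of some nonempty event. -/
def isMaxEvident [Fintype Ω] [DecidableEq Ω] (μ : Ω → ℝ)
    (part : Fin 2 → Ω → Finset Ω) (C E : Finset Ω) : Prop :=
  ∃ F : Finset Ω, F.Nonempty ∧ isMaxEvidentSup μ part C F E

/-- `E` is a super-`p`-evident `C`-indicating event. -/
def superEvidentInd [Fintype Ω] [DecidableEq Ω] (μ : Ω → ℝ)
    (part : Fin 2 → Ω → Finset Ω) (p : ℝ) (C E : Finset Ω) : Prop :=
  ∀ i : Fin 2, ∀ ω ∈ E, p < condP μ part i E ω ∧ p < condP μ part i C ω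

/-- `E` is the largest super-evident `C`-indicating subset of `F`. -/
def isLargestSuperSub [Fintype Ω] [DecidableEq Ω] (μ : Ω → ℝ)
    (part : Fin 2 → Ω → Finset Ω) (C F E : Finset Ω) : Prop :=
  E ⊆ F ∧ ∃ p : ℝ, isEvidenceLevel μ part C F p ∧ superEvidentInd μ part p C E ∧
    ∀ G : Finset Ω, G ⊆ F → superEvidentInd μ part p C G → G ⊆ E

/-- If some `p`-evident `C`-indicating event exists, then there is a unique largest one. -/
theorem existsUnique_largest_pEvidentInd [Fintype Ω] [DecidableEq Ω] [Nonempty Ω]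
    (μ : Ω → ℝ) (part : Fin 2 → Ω → Finset Ω)
    (hμpos : ∀ ω : Ω, 0 < μ ω) (hμsum : ∑ ω : Ω, μ ω = 1)
    (hmem : ∀ (i : Fin 2) (ω : Ω), ω ∈ part i ω)
    (hcell : ∀ (i : Fin 2) (ω ω' : Ω), ω' ∈ part i ω → part i ω' = part i ω)
    (p : ℝ) (C : Finset Ω)
    (h : ∃ E : Finset Ω, pEvidentInd μ part p C E) :
    ∃! E : Finset Ω, isLargestInd μ part p C E := by
  classical
  have hmono : ∀ (i : Fin 2) (ω : Ω) (E F : Finset Ω), E ⊆ F →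
      condP μ part i E ω ≤ condP μ part i F ω := by
    intro i ω E F hEF
    unfold condP
    have hden : 0 < ∑ x ∈ part i ω, μ x :=
      Finset.sum_pos (fun x _ => hμpos x) ⟨ω, hmem i ω⟩
    gcongr
    · intro x _ _; exact (hμpos x).le
  set S : Finset (Finset Ω) :=
    Finset.univ.powerset.filter (fun E => pEvidentInd μ part p C E) with hS
  set G : Finset Ω := S.sup id with hG
  have hsub : ∀ F : Finset Ω, pEvidentInd μ part p C F → F ⊆ G := by
    intro F hF
    have : F ∈ S := by
      simp only [hS, Finset.mem_filter, Finset.mem_powerset]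
      exact ⟨Finset.subset_univ _, hF⟩
    exact Finset.le_sup (f := id) this
  have hGmem : ∀ ω ∈ G, ∃ F : Finset Ω, pEvidentInd μ part p C F ∧ ω ∈ F := by
    intro ω hω
    rw [hG, Finset.mem_sup] at hω
    obtain ⟨F, hFS, hωF⟩ := hω
    simp only [hS, Finset.mem_filter, Finset.mem_powerset] at hFS
    exact ⟨F, hFS.2, hωF⟩
  have hGind : pEvidentInd μ part p C G := by
    constructor
    · intro i ω hω
      obtain ⟨F, hF, hωF⟩ := hGmem ω hω
      exact le_trans (hF.1 i ω hωF) (hmono i ω F G (hsub F hF))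
    · intro i ω hω
      obtain ⟨F, hF, hωF⟩ := hGmem ω hω
      exact hF.2 i ω hωF
  refine ⟨G, ⟨hGind, hsub⟩, ?_⟩
  intro E hE
  exact Finset.Subset.antisymm (hsub E hE.1) (hE.2 G hGind)
end

section
/- For any nonempty event F, there exists a unique maximally evident C-indicating superset of F: an event G such that G ⊇ F, G is the largest p-evident C-indicating event where p is the C-evidence level of G, and every event H ⊇ F has C-evidence level at most the C-evidence level of G. -/
open Finset

variable {Ω : Type*}

/-- Monotonicity of `condP` in the event. -/
lemma condP_mono' [Fintype Ω] [DecidableEq Ω] (μ : Ω → ℝ)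
    (part : Fin 2 → Ω → Finset Ω) (hμpos : ∀ ω : Ω, 0 < μ ω)
    (i : Fin 2) {E E' : Finset Ω} (h : E ⊆ E') (ω : Ω) :
    condP μ part i E ω ≤ condP μ part i E' ω := by
  unfold condP
  have hden : (0:ℝ) ≤ ∑ x ∈ part i ω, μ x :=
    Finset.sum_nonneg (fun x _ => (hμpos x).le)
  rcases hden.eq_or_lt with h0 | h0
  · simp [← h0]
  · have hnum : ∑ x ∈ E ∩ part i ω, μ x ≤ ∑ x ∈ E' ∩ part i ω, μ x :=
      Finset.sum_le_sum_of_subset_of_nonneg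
        (Finset.inter_subset_inter h (Finset.Subset.refl _))
        (fun x _ _ => (hμpos x).le)
    exact (div_le_div_iff_of_pos_right h0).mpr hnum

/-- The `C`-evidence level of a nonempty event. -/
noncomputable def lvl [Fintype Ω] [DecidableEq Ω] (μ : Ω → ℝ)
    (part : Fin 2 → Ω → Finset Ω) (C H : Finset Ω) : ℝ :=
  if h : H.Nonempty then
    (Finset.univ ×ˢ H).inf' (Finset.univ_nonempty.product h)
      (fun q => min (condP μ part q.1 H q.2) (condP μ part q.1 C q.2))
  else 0

lemma pEvidentInd_iff_le_lvl [Fintype Ω] [DecidableEq Ω] (μ : Ω → ℝ)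
    (part : Fin 2 → Ω → Finset Ω) (C H : Finset Ω) (hH : H.Nonempty) (q : ℝ) :
    pEvidentInd μ part q C H ↔ q ≤ lvl μ part C H := by
  rw [lvl, dif_pos hH]
  constructor
  · intro hq
    apply Finset.le_inf'
    rintro ⟨i, ω⟩ hm
    simp only [Finset.mem_product, Finset.mem_univ, true_and] at hm
    exact le_min (hq.1 i ω hm) (hq.2 i ω hm)
  · intro hq
    constructor
    · intro i ω hω
      have h1 : ((i, ω) : Fin 2 × Ω) ∈ Finset.univ ×ˢ H := by simp [hω]
      exact hq.trans ((Finset.inf'_le _ h1).trans (min_le_left _ _))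
    · intro i ω hω
      have h1 : ((i, ω) : Fin 2 × Ω) ∈ Finset.univ ×ˢ H := by simp [hω]
      exact hq.trans ((Finset.inf'_le _ h1).trans (min_le_right _ _))

lemma lvl_isEvidenceLevel [Fintype Ω] [DecidableEq Ω] (μ : Ω → ℝ)
    (part : Fin 2 → Ω → Finset Ω) (C H : Finset Ω) (hH : H.Nonempty) :
    isEvidenceLevel μ part C H (lvl μ part C H) := by
  constructor
  · exact (pEvidentInd_iff_le_lvl μ part C H hH _).mpr le_rfl
  · intro q hq
    exact (pEvidentInd_iff_le_lvl μ part C H hH q).mp hq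

/-- Every nonempty event has a unique maximally evident `C`-indicating superset. -/
theorem existsUnique_maxEvidentSup [Fintype Ω] [DecidableEq Ω] [Nonempty Ω]
    (μ : Ω → ℝ) (part : Fin 2 → Ω → Finset Ω)
    (hμpos : ∀ ω : Ω, 0 < μ ω) (hμsum : ∑ ω : Ω, μ ω = 1)
    (hmem : ∀ (i : Fin 2) (ω : Ω), ω ∈ part i ω)
    (hcell : ∀ (i : Fin 2) (ω ω' : Ω), ω' ∈ part i ω → part i ω' = part i ω)
    (C F : Finset Ω) (hF : F.Nonempty) :
    ∃! G : Finset Ω, isMaxEvidentSup μ part C F G := by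
  classical
  set 𝒮 : Finset (Finset Ω) := Finset.univ.filter (fun H => F ⊆ H) with h𝒮
  have hF𝒮 : F ∈ 𝒮 := by simp [h𝒮]
  set p := 𝒮.sup' ⟨F, hF𝒮⟩ (lvl μ part C) with hp
  set G : Finset Ω := (Finset.univ.filter (fun E => pEvidentInd μ part p C E)).sup id with hG
  have hsub : ∀ E : Finset Ω, pEvidentInd μ part p C E → E ⊆ G := by
    intro E hE x hx
    rw [hG]
    exact Finset.mem_sup.mpr ⟨E, Finset.mem_filter.mpr ⟨Finset.mem_univ E, hE⟩, hx⟩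
  obtain ⟨H₀, hH₀mem, hH₀⟩ := Finset.exists_mem_eq_sup' (⟨F, hF𝒮⟩ : 𝒮.Nonempty) (lvl μ part C)
  have hFH₀ : F ⊆ H₀ := by simpa [h𝒮] using hH₀mem
  have hH₀ne : H₀.Nonempty := hF.mono hFH₀
  have hH₀ind : pEvidentInd μ part p C H₀ := by
    rw [pEvidentInd_iff_le_lvl μ part C H₀ hH₀ne, hp, hH₀]
  have hFG : F ⊆ G := hFH₀.trans (hsub H₀ hH₀ind)
  have hGne : G.Nonempty := hF.mono hFG
  have hGind : pEvidentInd μ part p C G := by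
    constructor
    · intro i ω hω
      obtain ⟨E, hEmem, hωE⟩ := Finset.mem_sup.mp (by rwa [hG] at hω)
      simp only [Finset.mem_filter, Finset.mem_univ, true_and] at hEmem
      calc p ≤ condP μ part i E ω := hEmem.1 i ω hωE
        _ ≤ condP μ part i G ω := condP_mono' μ part hμpos i (hsub E hEmem) ω
    · intro i ω hω
      obtain ⟨E, hEmem, hωE⟩ := Finset.mem_sup.mp (by rwa [hG] at hω)
      simp only [Finset.mem_filter, Finset.mem_univ, true_and] at hEmem
      exact hEmem.2 i ω hωE
  have hle1 : p ≤ lvl μ part C G := (pEvidentInd_iff_le_lvl μ part C G hGne p).mp hGind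
  have hG𝒮 : G ∈ 𝒮 := by simp [h𝒮, hFG]
  have hle2 : lvl μ part C G ≤ p := Finset.le_sup' (lvl μ part C) hG𝒮
  have hlvlG : lvl μ part C G = p := le_antisymm hle2 hle1
  have hGlev : isEvidenceLevel μ part C G p := by
    rw [← hlvlG]; exact lvl_isEvidenceLevel μ part C G hGne
  have hGmax : ∀ H : Finset Ω, F ⊆ H → ∀ q : ℝ, isEvidenceLevel μ part C H q → q ≤ p := by
    intro H hFH q hq
    have hHne : H.Nonempty := hF.mono hFH
    have hq' : q = lvl μ part C H := hq.unique (lvl_isEvidenceLevel μ part C H hHne)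
    rw [hq']
    exact Finset.le_sup' (lvl μ part C) (by simp [h𝒮, hFH])
  refine ⟨G, ⟨hFG, p, hGlev, ⟨hGind, hsub⟩, hGmax⟩, ?_⟩
  rintro G' ⟨hFG', p', hlev', hlarge', hmax'⟩
  have h1 : p' ≤ p := hGmax G' hFG' p' hlev'
  have h2 : p ≤ p' := hmax' G hFG p hGlev
  have hpp : p' = p := le_antisymm h1 h2
  subst hpp
  exact Finset.Subset.antisymm (hsub G' hlarge'.1) (hlarge'.2 G hGind)
end

section
/- Fix p > 0 and a player i ∈ {0,1}, and let E be the largest p-evident C-indicating event. Let B = {ω' ∈ Ω : P_{1−i}(E | ω') ≥ p} be the event that player 1−i p-believes E. If at some state ω player i p-believes B (P_i(B | ω) ≥ p) and player i p-believes C (P_i(C | ω) ≥ p), then player i p-believes E at ω (P_i(E | ω) ≥ p). -/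
open Finset

variable {Ω : Type*}

/-- If player `i` `p`-believes that player `1 - i` `p`-believes the largest `p`-evident
`C`-indicating event `E`, and player `i` `p`-believes `C`, then player `i` `p`-believes
`E`. -/
theorem pBelieves_largest_of_pBelieves_other [Fintype Ω] [DecidableEq Ω] [Nonempty Ω]
    (μ : Ω → ℝ) (part : Fin 2 → Ω → Finset Ω)
    (hμpos : ∀ ω : Ω, 0 < μ ω) (hμsum : ∑ ω : Ω, μ ω = 1)
    (hmem : ∀ (i : Fin 2) (ω : Ω), ω ∈ part i ω)
    (hcell : ∀ (i : Fin 2) (ω ω' : Ω), ω' ∈ part i ω → part i ω' = part i ω)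
    (p : ℝ) (hp : 0 < p) (i : Fin 2) (C E B : Finset Ω)
    (hE : isLargestInd μ part p C E)
    (hB : ∀ ω' : Ω, ω' ∈ B ↔ p ≤ condP μ part (1 - i) E ω')
    (ω : Ω)
    (h1 : p ≤ condP μ part i B ω) (h2 : p ≤ condP μ part i C ω) :
    p ≤ condP μ part i E ω := by
  classical
  have hdenpos : ∀ (j : Fin 2) (ω' : Ω), 0 < ∑ x ∈ part j ω', μ x := fun j ω' =>
    Finset.sum_pos (fun x _ => hμpos x) ⟨ω', hmem j ω'⟩
  have hmono : ∀ (j : Fin 2) (ω' : Ω) (A A' : Finset Ω), A ⊆ A' →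
      condP μ part j A ω' ≤ condP μ part j A' ω' := by
    intro j ω' A A' hAA
    unfold condP
    gcongr <;> first
    | exact (hdenpos j ω').le
    | exact fun x _ _ => (hμpos x).le
    | exact Finset.inter_subset_inter_right hAA
  have hcongr : ∀ (j : Fin 2) (A : Finset Ω) (ω₁ ω₂ : Ω), part j ω₁ = part j ω₂ →
      condP μ part j A ω₁ = condP μ part j A ω₂ := by
    intro j A ω₁ ω₂ h
    unfold condP
    rw [h]
  have hne : ∀ (j : Fin 2) (A : Finset Ω) (ω' : Ω), p ≤ condP μ part j A ω' →
      (A ∩ part j ω').Nonempty := by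
    intro j A ω' hle
    by_contra hcon
    rw [Finset.not_nonempty_iff_eq_empty] at hcon
    have : condP μ part j A ω' = 0 := by
      unfold condP
      rw [hcon, Finset.sum_empty, zero_div]
    linarith
  have hBeq : condP μ part i (B ∩ part i ω) ω = condP μ part i B ω := by
    unfold condP
    rw [Finset.inter_assoc, Finset.inter_self]
  have hij' : ∀ i j : Fin 2, j = i ∨ j = 1 - i := by decide
  have hij : ∀ j : Fin 2, j = i ∨ j = 1 - i := hij' i
  -- F is a p-evident C-indicating event
  set F := E ∪ (B ∩ part i ω) with hFdef
  have hFind : pEvidentInd μ part p C F := by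
    constructor
    · intro j ω' hω'
      rcases Finset.mem_union.mp hω' with hωE | hωB
      · exact le_trans (hE.1.1 j ω' hωE) (hmono j ω' E F Finset.subset_union_left)
      · have hωB' := Finset.mem_inter.mp hωB
        rcases hij j with rfl | rfl
        · have hcell' : part j ω' = part j ω := hcell j ω ω' hωB'.2
          rw [hcongr j F ω' ω hcell']
          calc p ≤ condP μ part j B ω := h1
            _ = condP μ part j (B ∩ part j ω) ω := hBeq.symm
            _ ≤ condP μ part j F ω := hmono j ω _ F Finset.subset_union_right
        · exact le_trans ((hB ω').mp hωB'.1) (hmono _ ω' E F Finset.subset_union_left)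
    · intro j ω' hω'
      rcases Finset.mem_union.mp hω' with hωE | hωB
      · exact hE.1.2 j ω' hωE
      · have hωB' := Finset.mem_inter.mp hωB
        rcases hij j with rfl | rfl
        · rw [hcongr j C ω' ω (hcell j ω ω' hωB'.2)]
          exact h2
        · have hEle := (hB ω').mp hωB'.1
          obtain ⟨ω'', hω''⟩ := hne _ E ω' hEle
          have hω'' := Finset.mem_inter.mp hω''
          rw [hcongr _ C ω' ω'' (hcell _ ω' ω'' hω''.2).symm]
          exact hE.1.2 _ ω'' hω''.1
  have hFE : F ⊆ E := hE.2 F hFind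
  have hsub : B ∩ part i ω ⊆ E := le_trans Finset.subset_union_right hFE
  calc p ≤ condP μ part i B ω := h1
    _ = condP μ part i (B ∩ part i ω) ω := hBeq.symm
    _ ≤ condP μ part i E ω := hmono i ω _ E hsub
end

section
/- Suppose messages are noiseless, i.e., for every player j and state ω', P_j(C | ω') > μ(C) implies P_j(C | ω') = 1, and suppose p* > μ(C), where p* = (c − b)/(a − b). Let S_A = {ω' ∈ Ω : there exists a p*-evident C-indicating event F with P_{1−i}(F | ω') ≥ p*} (the set of states where player 1−i, following the rational p-belief strategy, plays A). If at state ω player i p*-believes some p*-evident C-indicating event (there exists a p*-evident C-indicating event F with P_i(F | ω) ≥ p*), then player i's expected payoff from playing A at ω, namely a·P_i(S_A ∩ C | ω) + d·P_i(S_A \ C | ω) + b·P_i(Ω \ S_A | ω), is at least c. -/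
open Finset

variable {Ω : Type*}

/-- Rational p-belief strategy, first case: if player `i` `p*`-believes some `p*`-evident
`C`-indicating event, then the expected payoff of playing `A` is at least `c`. -/
theorem rational_pBelief_play_A [Fintype Ω] [DecidableEq Ω] [Nonempty Ω]
    (μ : Ω → ℝ) (part : Fin 2 → Ω → Finset Ω)
    (hμpos : ∀ ω : Ω, 0 < μ ω) (hμsum : ∑ ω : Ω, μ ω = 1)
    (hmem : ∀ (i : Fin 2) (ω : Ω), ω ∈ part i ω)
    (hcell : ∀ (i : Fin 2) (ω ω' : Ω), ω' ∈ part i ω → part i ω' = part i ω)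
    (a b c d : ℝ) (hac : c < a) (hbc : b < c) (hdc : d < c)
    (C : Finset Ω) (i : Fin 2) (ω : Ω)
    (pstar : ℝ) (hpstar : pstar = (c - b) / (a - b))
    (hnoiseless : ∀ (j : Fin 2) (ω' : Ω),
      (∑ x ∈ C, μ x) < condP μ part j C ω' → condP μ part j C ω' = 1)
    (hprior : (∑ x ∈ C, μ x) < pstar)
    (SA : Finset Ω)
    (hSA : ∀ ω' : Ω, ω' ∈ SA ↔
      ∃ F : Finset Ω, pEvidentInd μ part pstar C F ∧ pstar ≤ condP μ part (1 - i) F ω')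
    (hbelief : ∃ F : Finset Ω, pEvidentInd μ part pstar C F ∧ pstar ≤ condP μ part i F ω) :
    c ≤ a * condP μ part i (SA ∩ C) ω + d * condP μ part i (SA \ C) ω +
      b * condP μ part i (Finset.univ \ SA) ω := by
  obtain ⟨F, hF, hFω⟩ := hbelief
  set T := part i ω with hT
  have hDpos : 0 < ∑ x ∈ T, μ x := Finset.sum_pos (fun x _ => hμpos x) ⟨ω, hmem i ω⟩
  have hCnonneg : 0 ≤ ∑ x ∈ C, μ x := Finset.sum_nonneg fun x _ => (hμpos x).le
  have hp0 : 0 < pstar := lt_of_le_of_lt hCnonneg hprior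
  have hFTpos : 0 < ∑ x ∈ F ∩ T, μ x := by
    by_contra h
    push_neg at h
    have : condP μ part i F ω ≤ 0 := div_nonpos_of_nonpos_of_nonneg h hDpos.le
    linarith
  have hFT : (F ∩ T).Nonempty := by
    by_contra h
    rw [Finset.not_nonempty_iff_eq_empty] at h
    rw [h, Finset.sum_empty] at hFTpos
    exact lt_irrefl 0 hFTpos
  obtain ⟨ω', hω'⟩ := hFT
  have hω'F : ω' ∈ F := (Finset.mem_inter.mp hω').1
  have hω'T : ω' ∈ T := (Finset.mem_inter.mp hω').2
  have hpart : part i ω' = T := hcell i ω ω' hω'T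
  have hCω' : pstar ≤ condP μ part i C ω' := hF.2 i ω' hω'F
  have hCωeq : condP μ part i C ω = condP μ part i C ω' := by
    unfold condP
    rw [hpart]
  have hC1 : condP μ part i C ω = 1 := by
    apply hnoiseless
    rw [hCωeq]
    linarith
  have hCT : ∑ y ∈ C ∩ T, μ y = ∑ y ∈ T, μ y := by
    have h := hC1
    unfold condP at h
    rwa [div_eq_one_iff_eq hDpos.ne'] at h
  have hTC : T ⊆ C := by
    intro x hx
    by_contra hxc
    have hsub : C ∩ T ⊆ T.erase x := by
      intro y hy
      rw [Finset.mem_erase]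
      refine ⟨?_, (Finset.mem_inter.mp hy).2⟩
      rintro rfl
      exact hxc (Finset.mem_inter.mp hy).1
    have h1 : ∑ y ∈ C ∩ T, μ y ≤ ∑ y ∈ T.erase x, μ y :=
      Finset.sum_le_sum_of_subset_of_nonneg hsub (fun y _ _ => (hμpos y).le)
    have h2 : ∑ y ∈ T.erase x, μ y = (∑ y ∈ T, μ y) - μ x :=
      Finset.sum_erase_eq_sub hx
    have := hμpos x
    linarith
  have hFSA : F ⊆ SA := by
    intro y hy
    rw [hSA]
    exact ⟨F, hF, hF.1 (1 - i) y hy⟩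
  have hSACeq : SA ∩ C ∩ T = SA ∩ T := by
    ext x
    simp only [Finset.mem_inter]
    constructor
    · rintro ⟨⟨h1, _⟩, h2⟩; exact ⟨h1, h2⟩
    · rintro ⟨h1, h2⟩; exact ⟨⟨h1, hTC h2⟩, h2⟩
  have hSdCeq : (SA \ C) ∩ T = ∅ := by
    ext x
    simp only [Finset.mem_inter, Finset.mem_sdiff, Finset.notMem_empty, iff_false]
    rintro ⟨⟨_, hnc⟩, ht⟩
    exact hnc (hTC ht)
  have hcompl : (Finset.univ \ SA) ∩ T = T \ (SA ∩ T) := by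
    ext x
    simp only [Finset.mem_inter, Finset.mem_sdiff, Finset.mem_univ, true_and]
    tauto
  have hmono : ∑ x ∈ F ∩ T, μ x ≤ ∑ x ∈ SA ∩ T, μ x :=
    Finset.sum_le_sum_of_subset_of_nonneg
      (fun y hy => Finset.mem_inter.mpr
        ⟨hFSA (Finset.mem_inter.mp hy).1, (Finset.mem_inter.mp hy).2⟩)
      (fun y _ _ => (hμpos y).le)
  have hsge : pstar ≤ condP μ part i SA ω := by
    refine le_trans hFω ?_
    unfold condP
    exact div_le_div_of_nonneg_right hmono hDpos.le
  have hcomp_sum : ∑ x ∈ T \ (SA ∩ T), μ x = (∑ x ∈ T, μ x) - ∑ x ∈ SA ∩ T, μ x :=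
    Finset.sum_sdiff_eq_sub Finset.inter_subset_right
  have hSACval : condP μ part i (SA ∩ C) ω = condP μ part i SA ω := by
    unfold condP
    rw [show SA ∩ C ∩ part i ω = SA ∩ part i ω from hSACeq]
  have hSdCval : condP μ part i (SA \ C) ω = 0 := by
    unfold condP
    rw [show SA \ C ∩ part i ω = ∅ from hSdCeq, Finset.sum_empty, zero_div]
  have hcomplval : condP μ part i (Finset.univ \ SA) ω = 1 - condP μ part i SA ω := by
    unfold condP
    rw [show Finset.univ \ SA ∩ part i ω = part i ω \ (SA ∩ part i ω) from hcompl,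
      hcomp_sum, sub_div, div_self hDpos.ne']
  rw [hSACval, hSdCval, hcomplval]
  have hab : (0:ℝ) < a - b := by linarith
  have hpval : pstar * (a - b) = c - b := by
    rw [hpstar, div_mul_cancel₀]
    exact hab.ne'
  set s := condP μ part i SA ω
  nlinarith [mul_le_mul_of_nonneg_right hsge hab.le]
end
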